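/- Let d ≥ 1 and r > 0. Let μ and ν be compactly supported probability measures on ℝ^d, let g_r be the N(0, rI_d) density, and let p = μ ⋆ g_r and q = ν ⋆ g_r be the densities of the Gaussian-smoothed measures (i.e., p(x) = ∫ g_r(x − u) dμ(u) and similarly for q). Assume the differential entropies h(p) = −∫ p log p, h(q) = −∫ q log q, and h(p ∗ q) = −∫ (p∗q) log(p∗q) are defined and finite. Then h(p ∗ q) ≤ h(p) + h(q) − (d/2) · log(πr). Equivalently, if X_r = X + √r Z₁ and Y_r = Y + √r Z₂ are independent r-smoothed random variables (X ∼ μ, Y ∼ ν, Z₁, Z₂ standard Gaussian, all independent), then h(X_r + Y_r) ≤ h(X_r) + h(Y_r) − (d/2) log(πr). -/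

import Mathlib

open MeasureTheory Set Filter
open scoped ENNReal

/-- The density of the centered Gaussian distribution `N(0, sI_d)` on `ℝ^d`:
`g_s(x) = (2πs)^{−d/2} e^{−‖x‖²/(2s)}`. -/
noncomputable def gaussDens (d : ℕ) (s : ℝ) (x : EuclideanSpace ℝ (Fin d)) : ℝ :=
  (2 * Real.pi * s) ^ (-(d : ℝ) / 2) * Real.exp (-‖x‖ ^ 2 / (2 * s))

namespace RevEPIAux

variable {d : ℕ} {s r : ℝ}

lemma gauss_pos (hs : 0 < s) (x : EuclideanSpace ℝ (Fin d)) : 0 < gaussDens d s x := by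
  unfold gaussDens; positivity

lemma gauss_nonneg (hs : 0 < s) (x : EuclideanSpace ℝ (Fin d)) : 0 ≤ gaussDens d s x :=
  (gauss_pos hs x).le

@[fun_prop]
lemma gauss_continuous : Continuous (gaussDens d s) := by
  unfold gaussDens; fun_prop

@[fun_prop]
lemma gauss_measurable : Measurable (gaussDens d s) :=
  gauss_continuous.measurable

lemma gauss_le (hs : 0 < s) (x : EuclideanSpace ℝ (Fin d)) :
    gaussDens d s x ≤ (2 * Real.pi * s) ^ (-(d : ℝ) / 2) := by
  unfold gaussDens
  have h1 : Real.exp (-‖x‖ ^ 2 / (2 * s)) ≤ 1 := by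
    rw [Real.exp_le_one_iff]
    have : (0:ℝ) ≤ ‖x‖ ^ 2 := by positivity
    have h2s : (0:ℝ) < 2 * s := by linarith
    apply div_nonpos_of_nonpos_of_nonneg <;> linarith
  have hC : (0:ℝ) ≤ (2 * Real.pi * s) ^ (-(d : ℝ) / 2) := by positivity
  calc (2 * Real.pi * s) ^ (-(d : ℝ) / 2) * Real.exp (-‖x‖ ^ 2 / (2 * s))
      ≤ (2 * Real.pi * s) ^ (-(d : ℝ) / 2) * 1 := by
        exact mul_le_mul_of_nonneg_left h1 hC
    _ = _ := mul_one _

lemma gauss_eq' (hs : 0 < s) :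
    gaussDens d s = fun x => (2 * Real.pi * s) ^ (-(d : ℝ) / 2) *
      Real.exp (-(1/(2*s)) * ‖x‖ ^ 2) := by
  funext x
  unfold gaussDens
  congr 1
  ring_nf

lemma gauss_integrable (hs : 0 < s) : Integrable (gaussDens d s) := by
  rw [gauss_eq' hs]
  have hb : (0:ℝ) < 1/(2*s) := by positivity
  have h := (GaussianFourier.integrable_cexp_neg_mul_sq_norm_add
    (V := EuclideanSpace ℝ (Fin d)) (b := ((1/(2*s) : ℝ):ℂ)) (by simpa using hb) 0 0).norm
  have h2 : Integrable (fun v : EuclideanSpace ℝ (Fin d) => Real.exp (-(1/(2*s)) * ‖v‖^2)) := by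
    refine h.congr ?_
    filter_upwards with v
    simp [Complex.norm_exp]
    left; norm_cast
  exact h2.const_mul _

lemma gauss_integral (hs : 0 < s) : ∫ x, gaussDens d s x = 1 := by
  rw [gauss_eq' hs]
  rw [integral_const_mul]
  have hb : (0:ℝ) < 1/(2*s) := by positivity
  rw [GaussianFourier.integral_rexp_neg_mul_sq_norm hb]
  rw [finrank_euclideanSpace_fin]
  have : Real.pi / (1/(2*s)) = 2 * Real.pi * s := by field_simp
  rw [this, ← Real.rpow_add (by positivity)]
  have h0 : (-(d:ℝ)/2 + (d:ℝ)/2 : ℝ) = 0 := by ring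
  rw [h0, Real.rpow_zero]

lemma gauss_mul (hr : 0 < r) (a b : EuclideanSpace ℝ (Fin d)) :
    gaussDens d r a * gaussDens d r b
      = gaussDens d (2*r) (a+b) * gaussDens d (r/2) ((2:ℝ)⁻¹ • (a-b)) := by
  unfold gaussDens
  have hpar : ‖a+b‖^2 + ‖a-b‖^2 = 2*(‖a‖^2+‖b‖^2) := by
    simpa [pow_two] using parallelogram_law_with_norm ℝ a b
  have hnorm : ‖(2:ℝ)⁻¹ • (a-b)‖ = 2⁻¹ * ‖a-b‖ := by
    rw [norm_smul]; norm_num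
  have hc : (2*Real.pi*r) ^ (-(d:ℝ)/2) * (2*Real.pi*r) ^ (-(d:ℝ)/2)
      = (2*Real.pi*(2*r)) ^ (-(d:ℝ)/2) * (2*Real.pi*(r/2)) ^ (-(d:ℝ)/2) := by
    rw [← Real.mul_rpow (by positivity) (by positivity),
        ← Real.mul_rpow (by positivity) (by positivity)]
    congr 1
    ring
  have he : Real.exp (-‖a‖^2/(2*r)) * Real.exp (-‖b‖^2/(2*r))
      = Real.exp (-‖a+b‖^2/(2*(2*r))) * Real.exp (-‖(2:ℝ)⁻¹ • (a-b)‖^2/(2*(r/2))) := by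
    rw [← Real.exp_add, ← Real.exp_add, hnorm]
    congr 1
    have hr' : r ≠ 0 := hr.ne'
    field_simp
    linear_combination hpar
  calc (2*Real.pi*r) ^ (-(d:ℝ)/2) * Real.exp (-‖a‖^2/(2*r)) *
        ((2*Real.pi*r) ^ (-(d:ℝ)/2) * Real.exp (-‖b‖^2/(2*r)))
      = ((2*Real.pi*r) ^ (-(d:ℝ)/2) * (2*Real.pi*r) ^ (-(d:ℝ)/2)) *
        (Real.exp (-‖a‖^2/(2*r)) * Real.exp (-‖b‖^2/(2*r))) := by ring
    _ = ((2*Real.pi*(2*r)) ^ (-(d:ℝ)/2) * (2*Real.pi*(r/2)) ^ (-(d:ℝ)/2)) *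
        (Real.exp (-‖a+b‖^2/(2*(2*r))) * Real.exp (-‖(2:ℝ)⁻¹ • (a-b)‖^2/(2*(r/2)))) := by
        rw [hc, he]
    _ = _ := by ring

lemma gauss_mul_le (hr : 0 < r) (a b : EuclideanSpace ℝ (Fin d)) :
    (Real.pi*r) ^ ((d:ℝ)/2) * (gaussDens d r a * gaussDens d r b)
      ≤ gaussDens d (2*r) (a+b) := by
  rw [gauss_mul hr a b]
  have h2 : gaussDens d (r/2) ((2:ℝ)⁻¹ • (a-b)) ≤ (Real.pi*r) ^ (-(d:ℝ)/2) := by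
    have := gauss_le (d := d) (by linarith : (0:ℝ) < r/2) ((2:ℝ)⁻¹ • (a-b))
    have heq : 2 * Real.pi * (r/2) = Real.pi * r := by ring
    rwa [heq] at this
  have hG : (0:ℝ) ≤ gaussDens d (2*r) (a+b) := gauss_nonneg (by linarith) _
  have hcpos : (0:ℝ) < (Real.pi*r) ^ ((d:ℝ)/2) := by positivity
  calc (Real.pi*r) ^ ((d:ℝ)/2) * (gaussDens d (2*r) (a+b) * gaussDens d (r/2) ((2:ℝ)⁻¹ • (a-b)))
      ≤ (Real.pi*r) ^ ((d:ℝ)/2) * (gaussDens d (2*r) (a+b) * (Real.pi*r) ^ (-(d:ℝ)/2)) := by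
        apply mul_le_mul_of_nonneg_left _ hcpos.le
        exact mul_le_mul_of_nonneg_left h2 hG
    _ = gaussDens d (2*r) (a+b) * ((Real.pi*r) ^ ((d:ℝ)/2) * (Real.pi*r) ^ (-(d:ℝ)/2)) := by ring
    _ = gaussDens d (2*r) (a+b) := by
        have h0 : ((d:ℝ)/2 + -(d:ℝ)/2 : ℝ) = 0 := by ring
        rw [← Real.rpow_add (by positivity), h0, Real.rpow_zero, mul_one]

lemma gauss_conv (hr : 0 < r) (u v s : EuclideanSpace ℝ (Fin d)) :
    ∫ τ, gaussDens d r (τ - u) * gaussDens d r (s - τ - v)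
      = gaussDens d (2*r) (s - u - v) := by
  have hptw : ∀ τ, gaussDens d r (τ-u) * gaussDens d r (s-τ-v)
      = gaussDens d (2*r) (s-u-v) * gaussDens d (r/2) (τ - (2:ℝ)⁻¹ • (u + s - v)) := by
    intro τ
    rw [gauss_mul hr]
    congr 2
    · abel
    · module
  simp_rw [hptw]
  rw [integral_const_mul, integral_sub_right_eq_self (gaussDens d (r/2)) _,
    gauss_integral (by linarith), mul_one]

end RevEPIAux


namespace RevEPIAux

variable {d : ℕ} {r : ℝ}

lemma gauss_shift_integrable_prob (hr : 0 < r) (μ : Measure (EuclideanSpace ℝ (Fin d)))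
    [IsProbabilityMeasure μ] (x : EuclideanSpace ℝ (Fin d)) :
    Integrable (fun u => gaussDens d r (x - u)) μ := by
  refine (integrable_const ((2 * Real.pi * r) ^ (-(d:ℝ)/2))).mono' ?_ ?_
  · have hcont : Continuous (fun u => gaussDens d r (x - u)) := by fun_prop
    exact hcont.aestronglyMeasurable
  · filter_upwards with u
    rw [Real.norm_eq_abs, abs_of_nonneg (gauss_nonneg hr _)]
    exact gauss_le hr _

lemma smoothed_props (hr : 0 < r) (μ : Measure (EuclideanSpace ℝ (Fin d)))
    [IsProbabilityMeasure μ] (p : EuclideanSpace ℝ (Fin d) → ℝ)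
    (hp : ∀ x, p x = ∫ u, gaussDens d r (x - u) ∂μ) :
    (∀ x, 0 < p x) ∧ (∀ x, p x ≤ (2 * Real.pi * r) ^ (-(d:ℝ)/2)) ∧
    StronglyMeasurable p ∧ Integrable p ∧ (∫ x, p x = 1) ∧
    (∀ x, ENNReal.ofReal (p x) = ∫⁻ u, ENNReal.ofReal (gaussDens d r (x - u)) ∂μ) := by
  have hpos : ∀ x, 0 < p x := by
    intro x
    rw [hp x]
    rw [integral_pos_iff_support_of_nonneg (fun u => gauss_nonneg hr _)
      (gauss_shift_integrable_prob hr μ x)]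
    have : (Function.support fun u => gaussDens d r (x - u)) = univ := by
      ext u; simp [Function.mem_support, (gauss_pos hr (x - u)).ne']
    rw [this]
    simp
  have hle : ∀ x, p x ≤ (2 * Real.pi * r) ^ (-(d:ℝ)/2) := by
    intro x
    rw [hp x]
    calc ∫ u, gaussDens d r (x - u) ∂μ
        ≤ ∫ _, (2 * Real.pi * r) ^ (-(d:ℝ)/2) ∂μ :=
          integral_mono (gauss_shift_integrable_prob hr μ x) (integrable_const _)
            (fun u => gauss_le hr _)
      _ = (2 * Real.pi * r) ^ (-(d:ℝ)/2) := by simp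
  have hsm : StronglyMeasurable p := by
    have h1 : StronglyMeasurable (Function.uncurry fun x u => gaussDens d r (x - u)) :=
      (gauss_continuous.comp (continuous_fst.sub continuous_snd)).stronglyMeasurable
    have h2 : p = fun x => ∫ u, (Function.uncurry fun x u => gaussDens d r (x - u)) (x, u) ∂μ := by
      funext x; exact hp x
    rw [h2]
    exact h1.integral_prod_right'
  have hofReal : ∀ x, ENNReal.ofReal (p x)
      = ∫⁻ u, ENNReal.ofReal (gaussDens d r (x - u)) ∂μ := by
    intro x
    rw [hp x]
    exact ofReal_integral_eq_lintegral_ofReal (gauss_shift_integrable_prob hr μ x)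
      (Filter.Eventually.of_forall fun u => gauss_nonneg hr _)
  have hlin : ∫⁻ x, ENNReal.ofReal (p x) = 1 := by
    have hmeas2 : Measurable (Function.uncurry fun x u : EuclideanSpace ℝ (Fin d) =>
        ENNReal.ofReal (gaussDens d r (x - u))) :=
      ((gauss_continuous.comp (continuous_fst.sub continuous_snd)).measurable).ennreal_ofReal
    calc ∫⁻ x, ENNReal.ofReal (p x)
        = ∫⁻ x, ∫⁻ u, ENNReal.ofReal (gaussDens d r (x - u)) ∂μ := lintegral_congr hofReal
      _ = ∫⁻ u, (∫⁻ x, ENNReal.ofReal (gaussDens d r (x - u))) ∂μ :=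
          lintegral_lintegral_swap hmeas2.aemeasurable
      _ = ∫⁻ _, 1 ∂μ := by
          refine lintegral_congr fun u => ?_
          have h3 : ∀ x : EuclideanSpace ℝ (Fin d), x - u = x + (-u) := fun x => sub_eq_add_neg x u
          simp_rw [h3]
          rw [lintegral_add_right_eq_self (fun x => ENNReal.ofReal (gaussDens d r x)) (-u)]
          rw [← ofReal_integral_eq_lintegral_ofReal (gauss_integrable hr)
            (Filter.Eventually.of_forall fun x => gauss_nonneg hr _)]
          rw [gauss_integral hr]
          simp
      _ = 1 := by simp
  have hint : Integrable p := by
    refine ⟨hsm.aestronglyMeasurable, ?_⟩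
    rw [hasFiniteIntegral_iff_ofReal (Filter.Eventually.of_forall fun x => (hpos x).le)]
    rw [hlin]
    exact ENNReal.one_lt_top
  have hone : ∫ x, p x = 1 := by
    rw [integral_eq_lintegral_of_nonneg_ae (Filter.Eventually.of_forall fun x => (hpos x).le)
      hsm.aestronglyMeasurable, hlin]
    simp
  exact ⟨hpos, hle, hsm, hint, hone, hofReal⟩


set_option maxHeartbeats 1000000 in
lemma smoothed_key (hr : 0 < r) (μ ν : Measure (EuclideanSpace ℝ (Fin d)))
    [IsProbabilityMeasure μ] [IsProbabilityMeasure ν]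
    (p q pq : EuclideanSpace ℝ (Fin d) → ℝ)
    (hp : ∀ x, p x = ∫ u, gaussDens d r (x - u) ∂μ)
    (hq : ∀ x, q x = ∫ u, gaussDens d r (x - u) ∂ν)
    (hpq : ∀ t, pq t = ∫ τ, p τ * q (t - τ)) (x y : EuclideanSpace ℝ (Fin d)) :
    (Real.pi * r) ^ ((d:ℝ)/2) * (p x * q y) ≤ pq (x + y) := by
  obtain ⟨pp, pM, psm, pint, pone, pofReal⟩ := smoothed_props hr μ p hp
  obtain ⟨qp, qM, qsm, qint, qone, qofReal⟩ := smoothed_props hr ν q hq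
  have pq_nonneg : ∀ t, 0 ≤ pq t := fun t => by
    rw [hpq t]
    exact integral_nonneg fun τ => mul_nonneg (pp τ).le (qp _).le
  have conv_int : ∀ t, Integrable (fun τ => p τ * q (t - τ)) := by
    intro t
    refine (pint.const_mul ((2 * Real.pi * r) ^ (-(d:ℝ)/2))).mono' ?_ ?_
    · exact (psm.mul (qsm.comp_measurable (by fun_prop))).aestronglyMeasurable
    · filter_upwards with τ
      rw [Real.norm_eq_abs, abs_of_nonneg (mul_nonneg (pp τ).le (qp _).le)]
      calc p τ * q (t - τ) ≤ p τ * (2 * Real.pi * r) ^ (-(d:ℝ)/2) :=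
            mul_le_mul_of_nonneg_left (qM _) (pp τ).le
        _ = (2 * Real.pi * r) ^ (-(d:ℝ)/2) * p τ := mul_comm _ _
  have hpq_ofReal : ∀ t, ENNReal.ofReal (pq t)
      = ∫⁻ τ, ENNReal.ofReal (p τ) * ENNReal.ofReal (q (t - τ)) := by
    intro t
    rw [hpq t, ofReal_integral_eq_lintegral_ofReal (conv_int t)
      (Filter.Eventually.of_forall fun τ => mul_nonneg (pp τ).le (qp _).le)]
    exact lintegral_congr fun τ => ENNReal.ofReal_mul (pp τ).le
  set s : EuclideanSpace ℝ (Fin d) := x + y with hs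
  -- inner convolution integral identity
  have inner_eq : ∀ u v : EuclideanSpace ℝ (Fin d),
      (∫⁻ τ, ENNReal.ofReal (gaussDens d r (τ - u)) * ENNReal.ofReal (gaussDens d r (s - τ - v)))
        = ENNReal.ofReal (gaussDens d (2*r) (s - u - v)) := by
    intro u v
    have hint : Integrable (fun τ => gaussDens d r (τ - u) * gaussDens d r (s - τ - v)) := by
      refine (((gauss_integrable (d := d) hr).comp_sub_right u).const_mul
        ((2 * Real.pi * r) ^ (-(d:ℝ)/2))).mono' ?_ ?_
      · have hcont : Continuous (fun τ : EuclideanSpace ℝ (Fin d) =>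
            gaussDens d r (τ - u) * gaussDens d r (s - τ - v)) := by fun_prop
        exact hcont.aestronglyMeasurable
      · filter_upwards with τ
        rw [Real.norm_eq_abs, abs_of_nonneg (mul_nonneg (gauss_nonneg hr _) (gauss_nonneg hr _))]
        calc gaussDens d r (τ - u) * gaussDens d r (s - τ - v)
            ≤ gaussDens d r (τ - u) * (2 * Real.pi * r) ^ (-(d:ℝ)/2) :=
              mul_le_mul_of_nonneg_left (gauss_le hr _) (gauss_nonneg hr _)
          _ = (2 * Real.pi * r) ^ (-(d:ℝ)/2) * gaussDens d r (τ - u) := mul_comm _ _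
    calc (∫⁻ τ, ENNReal.ofReal (gaussDens d r (τ - u)) * ENNReal.ofReal (gaussDens d r (s - τ - v)))
        = ∫⁻ τ, ENNReal.ofReal (gaussDens d r (τ - u) * gaussDens d r (s - τ - v)) :=
          lintegral_congr fun τ => (ENNReal.ofReal_mul (gauss_nonneg hr _)).symm
      _ = ENNReal.ofReal (∫ τ, gaussDens d r (τ - u) * gaussDens d r (s - τ - v)) :=
          (ofReal_integral_eq_lintegral_ofReal hint
            (Filter.Eventually.of_forall fun τ =>
              mul_nonneg (gauss_nonneg hr _) (gauss_nonneg hr _))).symm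
      _ = ENNReal.ofReal (gaussDens d (2*r) (s - u - v)) := by rw [gauss_conv hr u v s]
  -- main ENNReal chain
  have main : ENNReal.ofReal ((Real.pi * r) ^ ((d:ℝ)/2) * (p x * q y))
      ≤ ENNReal.ofReal (pq s) := by
    have h1 : ENNReal.ofReal (pq s)
        = ∫⁻ u, (∫⁻ τ, (∫⁻ v, ENNReal.ofReal (gaussDens d r (τ - u)) *
            ENNReal.ofReal (gaussDens d r (s - τ - v)) ∂ν)) ∂μ := by
      rw [hpq_ofReal s]
      have e1 : ∀ τ, ENNReal.ofReal (p τ) * ENNReal.ofReal (q (s - τ))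
          = ∫⁻ u, (∫⁻ v, ENNReal.ofReal (gaussDens d r (τ - u)) *
              ENNReal.ofReal (gaussDens d r (s - τ - v)) ∂ν) ∂μ := by
        intro τ
        rw [pofReal τ, qofReal (s - τ)]
        rw [← lintegral_mul_const (f := fun u => ENNReal.ofReal (gaussDens d r (τ - u)))
          _ (by fun_prop)]
        refine lintegral_congr fun u => ?_
        rw [← lintegral_const_mul (f := fun v => ENNReal.ofReal (gaussDens d r ((s - τ) - v)))
          _ (by fun_prop)]
      rw [lintegral_congr e1]
      refine lintegral_lintegral_swap ?_
      refine (Measurable.lintegral_prod_right' (f := fun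
        z : (EuclideanSpace ℝ (Fin d) × EuclideanSpace ℝ (Fin d)) × EuclideanSpace ℝ (Fin d) =>
          ENNReal.ofReal (gaussDens d r (z.1.1 - z.1.2)) *
          ENNReal.ofReal (gaussDens d r (s - z.1.1 - z.2))) ?_).aemeasurable
      fun_prop
    have h2 : ∀ u, (∫⁻ τ, (∫⁻ v, ENNReal.ofReal (gaussDens d r (τ - u)) *
          ENNReal.ofReal (gaussDens d r (s - τ - v)) ∂ν))
        = ∫⁻ v, (∫⁻ τ, ENNReal.ofReal (gaussDens d r (τ - u)) *
            ENNReal.ofReal (gaussDens d r (s - τ - v))) ∂ν := by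
      intro u
      refine lintegral_lintegral_swap ?_
      refine Measurable.aemeasurable ?_
      fun_prop
    have h3 : ∀ u v : EuclideanSpace ℝ (Fin d),
        ENNReal.ofReal ((Real.pi * r) ^ ((d:ℝ)/2) *
            (gaussDens d r (x - u) * gaussDens d r (y - v)))
          ≤ ∫⁻ τ, ENNReal.ofReal (gaussDens d r (τ - u)) *
              ENNReal.ofReal (gaussDens d r (s - τ - v)) := by
      intro u v
      rw [inner_eq u v]
      refine ENNReal.ofReal_le_ofReal ?_
      have hsum : s - u - v = (x - u) + (y - v) := by rw [hs]; abel
      rw [hsum]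
      exact gauss_mul_le hr (x - u) (y - v)
    have e2 : ∀ u, (∫⁻ v, ENNReal.ofReal ((Real.pi * r) ^ ((d:ℝ)/2) *
          (gaussDens d r (x - u) * gaussDens d r (y - v))) ∂ν)
        = (ENNReal.ofReal ((Real.pi * r) ^ ((d:ℝ)/2)) * ENNReal.ofReal (q y)) *
            ENNReal.ofReal (gaussDens d r (x - u)) := by
      intro u
      have e3 : ∀ v, ENNReal.ofReal ((Real.pi * r) ^ ((d:ℝ)/2) *
            (gaussDens d r (x - u) * gaussDens d r (y - v)))
          = (ENNReal.ofReal ((Real.pi * r) ^ ((d:ℝ)/2)) *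
              ENNReal.ofReal (gaussDens d r (x - u))) *
              ENNReal.ofReal (gaussDens d r (y - v)) := by
        intro v
        rw [ENNReal.ofReal_mul (by positivity), ENNReal.ofReal_mul (gauss_nonneg hr _),
          mul_assoc]
      simp_rw [e3]
      rw [lintegral_const_mul (f := fun v => ENNReal.ofReal (gaussDens d r (y - v)))
        _ (by fun_prop)]
      rw [← qofReal y]
      rw [mul_right_comm]
    calc ENNReal.ofReal ((Real.pi * r) ^ ((d:ℝ)/2) * (p x * q y))
        = ∫⁻ u, (∫⁻ v, ENNReal.ofReal ((Real.pi * r) ^ ((d:ℝ)/2) *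
            (gaussDens d r (x - u) * gaussDens d r (y - v))) ∂ν) ∂μ := by
          simp_rw [e2]
          rw [lintegral_const_mul (f := fun u => ENNReal.ofReal (gaussDens d r (x - u)))
            _ (by fun_prop)]
          rw [← pofReal x, ENNReal.ofReal_mul (by positivity),
            ENNReal.ofReal_mul (pp x).le]
          ring
      _ ≤ ∫⁻ u, (∫⁻ v, (∫⁻ τ, ENNReal.ofReal (gaussDens d r (τ - u)) *
            ENNReal.ofReal (gaussDens d r (s - τ - v))) ∂ν) ∂μ :=
          lintegral_mono fun u => lintegral_mono fun v => h3 u v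
      _ = ∫⁻ u, (∫⁻ τ, (∫⁻ v, ENNReal.ofReal (gaussDens d r (τ - u)) *
            ENNReal.ofReal (gaussDens d r (s - τ - v)) ∂ν)) ∂μ :=
          lintegral_congr fun u => (h2 u).symm
      _ = ENNReal.ofReal (pq s) := h1.symm
  exact (ENNReal.ofReal_le_ofReal_iff (pq_nonneg s)).1 main

end RevEPIAux

/-- **reverse entropy power inequality for Gaussian-smoothed measures.**
Let `μ, ν` be compactly supported probability measures on `ℝ^d`, let `p = μ ⋆ g_r` and
`q = ν ⋆ g_r` be the densities of their Gaussian smoothings, and let `p ∗ q` be their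
convolution. If the differential entropies `h(p)`, `h(q)`, `h(p ∗ q)` are defined
(the integrands are integrable), then `h(p ∗ q) ≤ h(p) + h(q) − (d/2)·log(πr)`. -/
theorem reverse_entropy_power_smoothed
    (d : ℕ) (hd : 1 ≤ d) (r : ℝ) (hr : 0 < r)
    (μ ν : Measure (EuclideanSpace ℝ (Fin d)))
    [IsProbabilityMeasure μ] [IsProbabilityMeasure ν]
    (hμ : ∃ K : Set (EuclideanSpace ℝ (Fin d)), IsCompact K ∧ μ Kᶜ = 0)
    (hν : ∃ K : Set (EuclideanSpace ℝ (Fin d)), IsCompact K ∧ ν Kᶜ = 0)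
    (p q pq : EuclideanSpace ℝ (Fin d) → ℝ)
    (hp : ∀ x, p x = ∫ u, gaussDens d r (x - u) ∂μ)
    (hq : ∀ x, q x = ∫ u, gaussDens d r (x - u) ∂ν)
    (hpq : ∀ t, pq t = ∫ τ, p τ * q (t - τ))
    (hpInt : Integrable fun x => p x * Real.log (p x))
    (hqInt : Integrable fun x => q x * Real.log (q x))
    (hpqInt : Integrable fun t => pq t * Real.log (pq t)) :
    -∫ t, pq t * Real.log (pq t) ≤
      (-∫ x, p x * Real.log (p x)) + (-∫ y, q y * Real.log (q y)) -
        ((d : ℝ) / 2) * Real.log (Real.pi * r) := by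
  obtain ⟨pp, pM, psm, pint, pone, -⟩ := RevEPIAux.smoothed_props hr μ p hp
  obtain ⟨qp, qM, qsm, qint, qone, -⟩ := RevEPIAux.smoothed_props hr ν q hq
  have key := RevEPIAux.smoothed_key hr μ ν p q pq hp hq hpq
  have hπr : 0 < Real.pi * r := by positivity
  have hc0 : (0:ℝ) < (Real.pi * r) ^ ((d:ℝ)/2) := by positivity
  have pq_nonneg : ∀ t, 0 ≤ pq t := fun t => by
    rw [hpq t]
    exact integral_nonneg fun τ => mul_nonneg (pp τ).le (qp _).le
  have conv_int : ∀ t, Integrable (fun τ => p τ * q (t - τ)) := by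
    intro t
    refine (pint.const_mul ((2 * Real.pi * r) ^ (-(d:ℝ)/2))).mono' ?_ ?_
    · exact (psm.mul (qsm.comp_measurable (by fun_prop))).aestronglyMeasurable
    · filter_upwards with τ
      rw [Real.norm_eq_abs, abs_of_nonneg (mul_nonneg (pp τ).le (qp _).le)]
      calc p τ * q (t - τ) ≤ p τ * (2 * Real.pi * r) ^ (-(d:ℝ)/2) :=
            mul_le_mul_of_nonneg_left (qM _) (pp τ).le
        _ = (2 * Real.pi * r) ^ (-(d:ℝ)/2) * p τ := mul_comm _ _
  have pqsm : StronglyMeasurable pq := by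
    have h1 : StronglyMeasurable (Function.uncurry fun t τ :
        EuclideanSpace ℝ (Fin d) => p τ * q (t - τ)) := by
      apply StronglyMeasurable.mul
      · exact psm.comp_measurable measurable_snd
      · exact qsm.comp_measurable (by fun_prop)
    have h2 : pq = fun t => ∫ τ, (Function.uncurry fun t τ :
        EuclideanSpace ℝ (Fin d) => p τ * q (t - τ)) (t, τ) := by
      funext t; exact hpq t
    rw [h2]
    exact h1.integral_prod_right'
  -- product integrability of the double integrand
  have hfmeas : AEStronglyMeasurable (Function.uncurry fun t τ :
      EuclideanSpace ℝ (Fin d) => p τ * q (t - τ) * Real.log (pq t))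
      (volume.prod volume) := by
    apply Measurable.aestronglyMeasurable
    apply Measurable.mul
    · apply Measurable.mul
      · exact psm.measurable.comp measurable_snd
      · exact qsm.measurable.comp (by fun_prop)
    · exact Real.measurable_log.comp (pqsm.measurable.comp measurable_fst)
  have hfint : Integrable (Function.uncurry fun t τ :
      EuclideanSpace ℝ (Fin d) => p τ * q (t - τ) * Real.log (pq t))
      (volume.prod volume) := by
    refine (integrable_prod_iff hfmeas).2 ⟨?_, ?_⟩
    · refine Filter.Eventually.of_forall fun t => ?_
      simpa using (conv_int t).mul_const (Real.log (pq t))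
    · have e1 : (fun t => ∫ τ, ‖p τ * q (t - τ) * Real.log (pq t)‖)
          = fun t => |pq t * Real.log (pq t)| := by
        funext t
        have e2 : (fun τ => ‖p τ * q (t - τ) * Real.log (pq t)‖)
            = fun τ => (p τ * q (t - τ)) * |Real.log (pq t)| := by
          funext τ
          rw [Real.norm_eq_abs, abs_mul, abs_of_nonneg (mul_nonneg (pp τ).le (qp _).le)]
        rw [e2, integral_mul_const, ← hpq t, abs_mul, abs_of_nonneg (pq_nonneg t)]
      simp only [Function.uncurry_apply_pair]
      rw [e1]
      exact hpqInt.abs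
  -- rewrite the pq-entropy integral as a double integral and swap
  have hswap : ∫ t, pq t * Real.log (pq t)
      = ∫ τ, (∫ t, p τ * q (t - τ) * Real.log (pq t)) := by
    have e0 : (fun t => pq t * Real.log (pq t))
        = fun t => ∫ τ, p τ * q (t - τ) * Real.log (pq t) := by
      funext t
      rw [hpq t, ← integral_mul_const]
    rw [e0]
    exact integral_integral_swap hfint
  have hshift : ∀ τ, (∫ t, p τ * q (t - τ) * Real.log (pq t))
      = ∫ y', p τ * q y' * Real.log (pq (y' + τ)) := by
    intro τ
    have h := integral_add_right_eq_self
      (μ := (volume : Measure (EuclideanSpace ℝ (Fin d))))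
      (fun t => p τ * q (t - τ) * Real.log (pq t)) τ
    rw [← h]
    simp only [add_sub_cancel_right]
  have hAint : Integrable (fun τ => ∫ t, p τ * q (t - τ) * Real.log (pq t)) :=
    hfint.integral_prod_right
  have hae : ∀ᵐ τ : EuclideanSpace ℝ (Fin d),
      Integrable (fun t => p τ * q (t - τ) * Real.log (pq t)) := hfint.prod_left_ae
  have hBint : Integrable (fun τ => p τ * (Real.log ((Real.pi * r) ^ ((d:ℝ)/2))
      + (∫ y', q y' * Real.log (q y'))) + p τ * Real.log (p τ)) :=
    (pint.mul_const _).add hpInt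
  have hmono : ∀ᵐ τ : EuclideanSpace ℝ (Fin d),
      p τ * (Real.log ((Real.pi * r) ^ ((d:ℝ)/2)) + (∫ y', q y' * Real.log (q y')))
        + p τ * Real.log (p τ)
      ≤ ∫ t, p τ * q (t - τ) * Real.log (pq t) := by
    filter_upwards [hae] with τ hτ
    have hint1 : Integrable (fun y' => p τ * q y' * Real.log (pq (y' + τ))) := by
      refine (hτ.comp_add_right τ).congr ?_
      filter_upwards with y'
      simp only [add_sub_cancel_right]
    have hint2 : Integrable (fun y' => p τ * q y' *
        (Real.log ((Real.pi * r) ^ ((d:ℝ)/2)) + Real.log (p τ) + Real.log (q y'))) := by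
      have h2a : Integrable (fun y' => (p τ * (Real.log ((Real.pi * r) ^ ((d:ℝ)/2))
          + Real.log (p τ))) * q y') := qint.const_mul _
      have h2b : Integrable (fun y' => p τ * (q y' * Real.log (q y'))) := hqInt.const_mul _
      exact (h2a.add h2b).congr (Filter.Eventually.of_forall fun y' => by
        simp only [Pi.add_apply]; ring)
    have hptw : ∀ y', p τ * q y' *
        (Real.log ((Real.pi * r) ^ ((d:ℝ)/2)) + Real.log (p τ) + Real.log (q y'))
        ≤ p τ * q y' * Real.log (pq (y' + τ)) := by
      intro y'
      have hpos1 : (0:ℝ) < (Real.pi * r) ^ ((d:ℝ)/2) * (p τ * q y') :=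
        mul_pos hc0 (mul_pos (pp τ) (qp y'))
      have hkey : (Real.pi * r) ^ ((d:ℝ)/2) * (p τ * q y') ≤ pq (τ + y') := key τ y'
      have hlog : Real.log ((Real.pi * r) ^ ((d:ℝ)/2)) + Real.log (p τ) + Real.log (q y')
          ≤ Real.log (pq (y' + τ)) := by
        have h1 : Real.log ((Real.pi * r) ^ ((d:ℝ)/2) * (p τ * q y'))
            = Real.log ((Real.pi * r) ^ ((d:ℝ)/2)) + Real.log (p τ) + Real.log (q y') := by
          rw [Real.log_mul hc0.ne' (mul_pos (pp τ) (qp y')).ne',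
            Real.log_mul (pp τ).ne' (qp y').ne', add_assoc]
        rw [← h1]
        have h2 : pq (τ + y') = pq (y' + τ) := by rw [add_comm]
        exact Real.log_le_log hpos1 (h2 ▸ hkey)
      exact mul_le_mul_of_nonneg_left hlog (mul_nonneg (pp τ).le (qp y').le)
    have hle := integral_mono hint2 hint1 hptw
    have hcomp : ∫ y', p τ * q y' *
        (Real.log ((Real.pi * r) ^ ((d:ℝ)/2)) + Real.log (p τ) + Real.log (q y'))
        = p τ * (Real.log ((Real.pi * r) ^ ((d:ℝ)/2)) + (∫ y', q y' * Real.log (q y')))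
          + p τ * Real.log (p τ) := by
      have e : (fun y' => p τ * q y' *
          (Real.log ((Real.pi * r) ^ ((d:ℝ)/2)) + Real.log (p τ) + Real.log (q y')))
          = fun y' => (p τ * (Real.log ((Real.pi * r) ^ ((d:ℝ)/2)) + Real.log (p τ))) * q y'
            + p τ * (q y' * Real.log (q y')) := by
        funext y'; ring
      rw [e, integral_add (qint.const_mul _) (hqInt.const_mul _),
        integral_const_mul, integral_const_mul, qone]
      ring
    rw [hshift τ, ← hcomp]
    exact hle
  have hfinal := integral_mono_ae hBint hAint hmono
  have hBeq : ∫ τ, (p τ * (Real.log ((Real.pi * r) ^ ((d:ℝ)/2))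
      + (∫ y', q y' * Real.log (q y'))) + p τ * Real.log (p τ))
      = (Real.log ((Real.pi * r) ^ ((d:ℝ)/2)) + (∫ y', q y' * Real.log (q y')))
        + ∫ x', p x' * Real.log (p x') := by
    rw [integral_add (pint.mul_const _) hpInt, integral_mul_const, pone]
    ring
  rw [hBeq, ← hswap] at hfinal
  have hlogc : Real.log ((Real.pi * r) ^ ((d:ℝ)/2)) = (d:ℝ)/2 * Real.log (Real.pi * r) :=
    Real.log_rpow hπr _
  rw [hlogc] at hfinal
  linarith
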